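/- In a real normed linear space X, if x, y are linearly independent vectors then there exists a real number β such that x + βy is Birkhoff-James orthogonal to y, and moreover ‖x + λy‖ ≥ ‖x + βy‖ > 0 for all real λ. -/

import Mathlib

theorem stmt_16 {X : Type*} [NormedAddCommGroup X] [NormedSpace ℝ X]
    (x y : X) (h : LinearIndependent ℝ ![x, y]) :
    ∃ β : ℝ, (∀ l : ℝ, ‖x + β • y‖ ≤ ‖x + β • y + l • y‖) ∧
      0 < ‖x + β • y‖ ∧ (∀ l : ℝ, ‖x + β • y‖ ≤ ‖x + l • y‖) := by
  have hpair := LinearIndependent.pair_iff.mp h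
  have hy : y ≠ 0 := by
    intro hy0
    exact one_ne_zero ((hpair 0 1 (by simp [hy0])).2)
  have hcont : Continuous (fun l : ℝ => ‖x + l • y‖) := by continuity
  have hten : Filter.Tendsto (fun l : ℝ => ‖x + l • y‖) (Filter.cocompact ℝ)
      Filter.atTop := by
    have h1 : Filter.Tendsto (fun l : ℝ => |l| * ‖y‖ - ‖x‖) (Filter.cocompact ℝ)
        Filter.atTop := by
      have habs : Filter.Tendsto (fun l : ℝ => |l|) (Filter.cocompact ℝ) Filter.atTop := by
        exact (tendsto_norm_cocompact_atTop (E := ℝ)).congr (fun l => Real.norm_eq_abs l)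
      exact (habs.atTop_mul_const (norm_pos_iff.mpr hy)).atTop_add tendsto_const_nhds
    refine Filter.tendsto_atTop_mono (fun l => ?_) h1
    have h2 : ‖l • y‖ ≤ ‖x + l • y‖ + ‖x‖ := by
      calc ‖l • y‖ = ‖(x + l • y) - x‖ := by rw [add_sub_cancel_left]
        _ ≤ ‖x + l • y‖ + ‖x‖ := norm_sub_le _ _
    rw [norm_smul, Real.norm_eq_abs] at h2
    linarith
  obtain ⟨β, hβ⟩ := hcont.exists_forall_le hten
  refine ⟨β, ?_, ?_, hβ⟩
  · intro l
    have := hβ (β + l)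
    simpa [add_smul, add_assoc] using this
  · refine norm_pos_iff.mpr ?_
    intro h0
    exact one_ne_zero (hpair 1 β (by simpa using h0)).1
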